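/- Involution step of Gessel–Viennot for n=2: the number of pairs of vertex-disjoint east/north lattice paths from D₁ to A₁ and from D₂ to A₂ equals λ_{11}λ_{22} − λ_{12}λ_{21} + N_{int}(id) − N_{int}(swap), where N_{int}(σ) is the number of intersecting pairs of paths D_i → A_{σ(i)}; and under the compatibility hypothesis N_{int}(id) = N_{int}(swap) and all pairs D_i → A_{swap(i)} intersect. -/

import Mathlib

/-- An east/north lattice path from `D` to `A`: steps `(+1,0)` or `(0,+1)`. -/
def IsENPath (p : List (ℤ × ℤ)) (D A : ℤ × ℤ) : Prop :=
  p.head? = some D ∧ p.getLast? = some A ∧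
  p.Chain' (fun u v => v = (u.1 + 1, u.2) ∨ v = (u.1, u.2 + 1))

/-- The number of east/north paths from `D` to `A` (binomial coefficient). -/
def gvCoef (D A : ℤ × ℤ) : ℕ :=
  Nat.choose ((A.1 - D.1) + (A.2 - D.2)).toNat (A.1 - D.1).toNat

/-- `nInt D A σ` is the number of *intersecting* pairs of east/north paths, the `i`-th
path going from `D i` to `A (σ i)`. -/
noncomputable def nInt (D A : Fin 2 → ℤ × ℤ) (σ : Equiv.Perm (Fin 2)) : ℕ :=
  Set.ncard {pq : List (ℤ × ℤ) × List (ℤ × ℤ) |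
    IsENPath pq.1 (D 0) (A (σ 0)) ∧ IsENPath pq.2 (D 1) (A (σ 1)) ∧
    ∃ v : ℤ × ℤ, v ∈ pq.1 ∧ v ∈ pq.2}

namespace GVaux
open List

abbrev V := ℤ × ℤ
abbrev ER (u v : V) : Prop := v = (u.1 + 1, u.2) ∨ v = (u.1, u.2 + 1)

lemma chain'_rel {α : Type*} {R : α → α → Prop} (hrefl : ∀ a, R a a)
    (htrans : ∀ a b c, R a b → R b c → R a c) :
    ∀ {l : List α} {a b}, l.Chain' R → l.head? = some a → l.getLast? = some b → R a b := by
  intro l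
  induction l with
  | nil => intro a b _ h; simp at h
  | cons x t ih =>
    intro a b hc ha hb
    cases t with
    | nil =>
      simp at ha hb; subst ha; subst hb; exact hrefl _
    | cons y t' =>
      unfold List.Chain' at hc; rw [List.isChain_cons_cons] at hc
      rw [List.getLast?_cons_cons] at hb
      simp at ha; subst ha
      exact htrans _ _ _ hc.1 (ih hc.2 rfl hb)

lemma path_le {p : List V} {D A : V} (h : IsENPath p D A) :
    D.1 ≤ A.1 ∧ D.2 ≤ A.2 := by
  obtain ⟨h1, h2, h3⟩ := h
  have : (fun u v : V => u.1 ≤ v.1 ∧ u.2 ≤ v.2) D A := by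
    refine chain'_rel (R := fun u v : V => u.1 ≤ v.1 ∧ u.2 ≤ v.2)
      (fun a => ⟨le_refl _, le_refl _⟩)
      (fun a b c hab hbc => ⟨hab.1.trans hbc.1, hab.2.trans hbc.2⟩)
      (h3.imp ?_) h1 h2
    rintro u v (rfl | rfl) <;> constructor <;> simp
  exact this

lemma path_nodup {p : List V} (h : p.Chain' ER) : p.Nodup := by
  have h2 : p.Chain' (fun u v : V => u.1 + u.2 < v.1 + v.2) := by
    refine h.imp ?_
    rintro u v (rfl | rfl) <;> simp
  haveI : IsTrans V (fun u v : V => u.1 + u.2 < v.1 + v.2) :=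
    ⟨fun a b c hab hbc => hab.trans hbc⟩
  have := List.isChain_iff_pairwise.mp h2
  exact this.imp (fun {a b} hab => by rintro rfl; omega)

def pathSet (D A : V) : Set (List V) := {p | IsENPath p D A}

lemma pathSet_empty {D A : V} (h : ¬(D.1 ≤ A.1 ∧ D.2 ≤ A.2)) : pathSet D A = ∅ := by
  ext p; simp only [pathSet, Set.mem_setOf_eq, Set.mem_empty_iff_false, iff_false]
  intro hp; exact h (path_le hp)

lemma path_decomp {p : List V} {D A : V} (h : IsENPath p D A) :
    (p = [D] ∧ D = A) ∨ ∃ t h', p = D :: t ∧ t.head? = some h' ∧ ER D h' ∧ IsENPath t h' A := by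
  obtain ⟨h1, h2, h3⟩ := h
  cases p with
  | nil => simp at h1
  | cons x t =>
    simp at h1; subst h1
    cases t with
    | nil => left; simp at h2; exact ⟨rfl, h2⟩
    | cons y t' =>
      right
      unfold List.Chain' at h3; rw [List.isChain_cons_cons] at h3
      rw [List.getLast?_cons_cons] at h2
      exact ⟨y :: t', y, rfl, rfl, h3.1, rfl, h2, h3.2⟩

lemma path_cons {t : List V} {h' D A : V} (h : IsENPath t h' A) (hr : ER D h') :
    IsENPath (D :: t) D A := by
  obtain ⟨h1, h2, h3⟩ := h
  refine ⟨rfl, ?_, ?_⟩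
  · cases t with
    | nil => simp at h1
    | cons y t' => rw [List.getLast?_cons_cons]; exact h2
  · unfold List.Chain'; rw [List.isChain_cons]
    exact ⟨fun y hy => by rw [h1] at hy; cases hy; exact hr, h3⟩

lemma pathSet_single (D : V) : pathSet D D = {[D]} := by
  ext p
  simp only [pathSet, Set.mem_setOf_eq, Set.mem_singleton_iff]
  constructor
  · intro hp
    rcases path_decomp hp with ⟨h1, _⟩ | ⟨t, h', _, _, hr, ht⟩
    · exact h1
    · exfalso
      have := path_le ht
      rcases hr with rfl | rfl <;> simp at this
  · rintro rfl; exact ⟨rfl, rfl, List.isChain_singleton _⟩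

lemma pathSet_rec {D A : V} (h : D.1 + D.2 < A.1 + A.2) :
    pathSet D A = (List.cons D '' pathSet (D.1 + 1, D.2) A) ∪
      (List.cons D '' pathSet (D.1, D.2 + 1) A) := by
  ext p
  simp only [pathSet, Set.mem_setOf_eq, Set.mem_union, Set.mem_image]
  constructor
  · intro hp
    rcases path_decomp hp with ⟨_, rfl⟩ | ⟨t, h', rfl, hh, hr, ht⟩
    · omega
    · rcases hr with rfl | rfl
      · left; exact ⟨t, ht, rfl⟩
      · right; exact ⟨t, ht, rfl⟩
  · rintro (⟨t, ht, rfl⟩ | ⟨t, ht, rfl⟩)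
    · exact path_cons ht (Or.inl rfl)
    · exact path_cons ht (Or.inr rfl)


lemma pathSet_count : ∀ n : ℕ, ∀ D A : V, ((A.1 - D.1) + (A.2 - D.2)).toNat = n →
    (pathSet D A).Finite ∧
    (pathSet D A).ncard = if D.1 ≤ A.1 ∧ D.2 ≤ A.2 then gvCoef D A else 0 := by
  intro n
  induction n with
  | zero =>
    intro D A hn
    by_cases hfe : D.1 ≤ A.1 ∧ D.2 ≤ A.2
    · have hDA : D = A := by
        have : A.1 - D.1 = 0 ∧ A.2 - D.2 = 0 := by omega
        exact Prod.ext (by omega) (by omega)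
      subst hDA
      rw [pathSet_single]
      refine ⟨Set.finite_singleton _, ?_⟩
      rw [if_pos hfe, Set.ncard_singleton]
      simp [gvCoef]
    · rw [pathSet_empty hfe]
      simp [hfe]
  | succ m ih =>
    intro D A hn
    by_cases hfe : D.1 ≤ A.1 ∧ D.2 ≤ A.2
    · have hsum : D.1 + D.2 < A.1 + A.2 := by omega
      have hE := ih (D.1 + 1, D.2) A (by simp; omega)
      have hN := ih (D.1, D.2 + 1) A (by simp; omega)
      have hinj : Function.Injective (List.cons D) := fun a b h => by
        injection h
      have hdisj : Disjoint (List.cons D '' pathSet (D.1 + 1, D.2) A)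
          (List.cons D '' pathSet (D.1, D.2 + 1) A) := by
        rw [Set.disjoint_left]
        rintro p ⟨t1, ht1, rfl⟩ ⟨t2, ht2, ht2e⟩
        have heq : t1 = t2 := by injection ht2e with _ h; exact h.symm
        subst heq
        have h1 := ht1.1
        have h2 := ht2.1
        rw [h1] at h2
        injection h2 with h2
        have := congrArg Prod.fst h2
        simp at this
      have hfin : (pathSet D A).Finite := by
        rw [pathSet_rec hsum]
        exact (hE.1.image _).union (hN.1.image _)
      refine ⟨hfin, ?_⟩
      rw [pathSet_rec hsum, Set.ncard_union_eq hdisj (hE.1.image _) (hN.1.image _),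
        Set.ncard_image_of_injOn hinj.injOn, Set.ncard_image_of_injOn hinj.injOn,
        hE.2, hN.2, if_pos hfe]
      -- arithmetic
      simp only [gvCoef]
      by_cases hx : D.1 + 1 ≤ A.1 <;> by_cases hy : D.2 + 1 ≤ A.2
      · rw [if_pos ⟨hx, hfe.2⟩, if_pos ⟨hfe.1, hy⟩]
        obtain ⟨k, hk⟩ : ∃ k, (A.1 - D.1).toNat = k + 1 := ⟨(A.1 - D.1).toNat - 1, by omega⟩
        obtain ⟨l, hl⟩ : ∃ l, (A.2 - D.2).toNat = l + 1 := ⟨(A.2 - D.2).toNat - 1, by omega⟩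
        rw [show (A.1 - (D.1 + 1)).toNat = k from by omega,
          show ((A.1 - (D.1 + 1)) + (A.2 - D.2)).toNat = k + l + 1 from by omega,
          show ((A.1 - D.1) + (A.2 - (D.2 + 1))).toNat = k + l + 1 from by omega,
          show ((A.1 - D.1) + (A.2 - D.2)).toNat = k + l + 1 + 1 from by omega, hk]
        exact (Nat.choose_succ_succ' (k + l + 1) k).symm
      · rw [if_pos ⟨hx, hfe.2⟩, if_neg (by simp; omega)]
        rw [show (A.1 - (D.1 + 1)).toNat = ((A.1 - (D.1 + 1)) + (A.2 - D.2)).toNat from by omega,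
          show (A.1 - D.1).toNat = ((A.1 - D.1) + (A.2 - D.2)).toNat from by omega]
        rw [Nat.choose_self, Nat.choose_self]
      · rw [if_neg (by simp; omega), if_pos ⟨hfe.1, hy⟩]
        rw [show (A.1 - D.1).toNat = 0 from by omega]
        rw [Nat.choose_zero_right, Nat.choose_zero_right]
      · omega
    · rw [pathSet_empty hfe]
      simp [hfe]

lemma pathSet_finite (D A : V) : (pathSet D A).Finite :=
  (pathSet_count _ D A rfl).1

lemma pathSet_ncard {D A : V} (h : D.1 ≤ A.1 ∧ D.2 ≤ A.2) :
    (pathSet D A).ncard = gvCoef D A := by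
  rw [(pathSet_count _ D A rfl).2, if_pos h]


/-! ### Tail swap -/

lemma first_hit {p : List V} (q : List V) (h : ∃ v, v ∈ p ∧ v ∈ q) :
    ∃ p1 v p2, p = p1 ++ v :: p2 ∧ v ∈ q ∧ ∀ u ∈ p1, u ∉ q := by
  induction p with
  | nil => obtain ⟨v, hv, _⟩ := h; simp at hv
  | cons x t ih =>
    by_cases hx : x ∈ q
    · exact ⟨[], x, t, rfl, hx, by simp⟩
    · obtain ⟨v, hv1, hv2⟩ := h
      have hvt : v ∈ t := by
        rcases List.mem_cons.mp hv1 with rfl | h'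
        · exact absurd hv2 hx
        · exact h'
      obtain ⟨p1, v', p2, he, hq, hnot⟩ := ih ⟨v, hvt, hv2⟩
      refine ⟨x :: p1, v', p2, by rw [he]; rfl, hq, ?_⟩
      rintro u hu
      rcases List.mem_cons.mp hu with rfl | h'
      · exact hx
      · exact hnot u h'

lemma takeWhile_eq {α : Type*} (P : α → Bool) :
    ∀ (l1 : List α) {x : α} (l2 : List α), (∀ u ∈ l1, P u = true) → P x = false →
      (l1 ++ x :: l2).takeWhile P = l1 ∧ (l1 ++ x :: l2).dropWhile P = x :: l2 := by
  intro l1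
  induction l1 with
  | nil =>
    intro x l2 _ hx
    simp [List.takeWhile_cons, List.dropWhile_cons, hx]
  | cons a t ih =>
    intro x l2 h1 hx
    have ha : P a = true := h1 a (by simp)
    have := ih l2 (fun u hu => h1 u (by simp [hu])) hx
    simp [List.takeWhile_cons, List.dropWhile_cons, ha, this.1, this.2]

noncomputable def tswap (pq : List V × List V) : List V × List V :=
  match pq.1.dropWhile (fun v => decide (v ∉ pq.2)) with
  | [] => pq
  | v :: p2 =>
    (pq.1.takeWhile (fun v => decide (v ∉ pq.2)) ++
        v :: (pq.2.dropWhile (fun u => decide (u ≠ v))).tail,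
     pq.2.takeWhile (fun u => decide (u ≠ v)) ++ v :: p2)

lemma tswap_eq (p1 : List V) (v : V) (p2 q1 q2 : List V)
    (hp1 : ∀ u ∈ p1, u ∉ q1 ++ v :: q2) (hq1 : v ∉ q1) :
    tswap (p1 ++ v :: p2, q1 ++ v :: q2) = (p1 ++ v :: q2, q1 ++ v :: p2) := by
  have hd1 := takeWhile_eq (fun u => decide (u ∉ q1 ++ v :: q2)) p1 (x := v) p2
    (fun u hu => by simpa using hp1 u hu)
    (decide_eq_false (not_not_intro (by simp)))
  have hd2 := takeWhile_eq (fun u => decide (u ≠ v)) q1 (x := v) q2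
    (fun u hu => decide_eq_true (fun h => hq1 (h ▸ hu)))
    (decide_eq_false (not_not_intro rfl))
  unfold tswap
  simp only [hd1.1, hd1.2, hd2.1, hd2.2, List.tail_cons]


lemma cross_path {p1 p2 q1 q2 : List V} {v Dp A Dq A' : V}
    (hp : IsENPath (p1 ++ v :: p2) Dp A) (hq : IsENPath (q1 ++ v :: q2) Dq A') :
    IsENPath (p1 ++ v :: q2) Dp A' := by
  obtain ⟨hp1, hp2, hp3⟩ := hp
  obtain ⟨hq1, hq2, hq3⟩ := hq
  refine ⟨?_, ?_, ?_⟩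
  · rw [List.head?_append] at hp1 ⊢
    simpa using hp1
  · rw [List.getLast?_append] at hq2 ⊢
    obtain ⟨b, hb⟩ := Option.isSome_iff_exists.mp
      (List.getLast?_isSome.mpr (List.cons_ne_nil v q2))
    rw [hb] at hq2 ⊢
    simpa using hq2
  · unfold List.Chain' at hp3 hq3 ⊢; rw [List.isChain_append] at hp3 hq3 ⊢
    refine ⟨hp3.1, hq3.2.1, ?_⟩
    intro x hx y hy
    simp at hy
    subst hy
    exact hp3.2.2 x hx v (by simp)

def intSet (Dp Ap Dq Aq : V) : Set (List V × List V) :=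
  {pq | IsENPath pq.1 Dp Ap ∧ IsENPath pq.2 Dq Aq ∧ ∃ v, v ∈ pq.1 ∧ v ∈ pq.2}

lemma tswap_mem {Dp Ap Dq Aq : V} {pq : List V × List V} (h : pq ∈ intSet Dp Ap Dq Aq) :
    tswap pq ∈ intSet Dp Aq Dq Ap ∧ tswap (tswap pq) = pq := by
  obtain ⟨p, q⟩ := pq
  obtain ⟨hp, hq, hint⟩ := h
  obtain ⟨p1, v, p2, hpe, hvq, hp1⟩ := first_hit q hint
  obtain ⟨q1, w, q2, hqe, hwv, hq1⟩ := first_hit [v] ⟨v, hvq, by simp⟩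
  simp only [List.mem_singleton] at hwv
  have hwv' := hwv.symm
  subst hwv'
  have hq1' : v ∉ q1 := fun hv => hq1 v hv (by simp)
  subst hpe; subst hqe
  have hsw : tswap (p1 ++ v :: p2, q1 ++ v :: q2) = (p1 ++ v :: q2, q1 ++ v :: p2) :=
    tswap_eq p1 v p2 q1 q2 hp1 hq1'
  have hnd := path_nodup hp.2.2
  rw [List.nodup_append'] at hnd
  have hdisj := hnd.2.2
  have hsw2 : tswap (p1 ++ v :: q2, q1 ++ v :: p2) = (p1 ++ v :: p2, q1 ++ v :: q2) := by
    refine tswap_eq p1 v q2 q1 p2 ?_ hq1'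
    intro u hu
    rw [List.mem_append]
    rintro (h1 | h2)
    · exact hp1 u hu (by rw [List.mem_append]; exact Or.inl h1)
    · exact hdisj hu h2
  rw [hsw]
  refine ⟨⟨cross_path hp hq, cross_path hq hp, v, ?_, ?_⟩, hsw2⟩
  · simp
  · simp

lemma intSet_ncard_eq (Dp Ap Dq Aq : V) :
    (intSet Dp Ap Dq Aq).ncard = (intSet Dp Aq Dq Ap).ncard := by
  have himg : tswap '' intSet Dp Ap Dq Aq = intSet Dp Aq Dq Ap := by
    apply Set.Subset.antisymm
    · rintro _ ⟨pq, hpq, rfl⟩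
      exact (tswap_mem hpq).1
    · intro y hy
      exact ⟨tswap y, (tswap_mem hy).1, (tswap_mem hy).2⟩
  rw [← himg]
  refine (Set.ncard_image_of_injOn ?_).symm
  intro a ha b hb hab
  rw [← (tswap_mem ha).2, ← (tswap_mem hb).2, hab]

lemma intSet_subset (Dp Ap Dq Aq : V) :
    intSet Dp Ap Dq Aq ⊆ pathSet Dp Ap ×ˢ pathSet Dq Aq := by
  rintro ⟨p, q⟩ ⟨hp, hq, _⟩
  exact ⟨hp, hq⟩

lemma prod_ncard (Dp Ap Dq Aq : V) (h1 : Dp.1 ≤ Ap.1 ∧ Dp.2 ≤ Ap.2)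
    (h2 : Dq.1 ≤ Aq.1 ∧ Dq.2 ≤ Aq.2) :
    (pathSet Dp Ap ×ˢ pathSet Dq Aq).ncard = gvCoef Dp Ap * gvCoef Dq Aq := by
  rw [← Nat.card_coe_set_eq, Nat.card_congr (Equiv.Set.prod _ _), Nat.card_prod,
    Nat.card_coe_set_eq, Nat.card_coe_set_eq, pathSet_ncard h1, pathSet_ncard h2]

end GVaux


/-- Involution step of Gessel–Viennot for `n = 2`. -/
theorem gessel_viennot_involution_step (D A : Fin 2 → ℤ × ℤ)
    (hnn : ∀ i j, (D i).1 ≤ (A j).1 ∧ (D i).2 ≤ (A j).2)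
    (compat : ∀ σ : Equiv.Perm (Fin 2), ∀ p q : List (ℤ × ℤ),
      IsENPath p (D 0) (A (σ 0)) → IsENPath q (D 1) (A (σ 1)) →
      (∀ v : ℤ × ℤ, ¬(v ∈ p ∧ v ∈ q)) → σ = 1) :
    ((Set.ncard {pq : List (ℤ × ℤ) × List (ℤ × ℤ) |
        IsENPath pq.1 (D 0) (A 0) ∧ IsENPath pq.2 (D 1) (A 1) ∧
        ∀ v : ℤ × ℤ, ¬(v ∈ pq.1 ∧ v ∈ pq.2)} : ℤ) =
      (gvCoef (D 0) (A 0) : ℤ) * (gvCoef (D 1) (A 1) : ℤ) -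
        (gvCoef (D 0) (A 1) : ℤ) * (gvCoef (D 1) (A 0) : ℤ) +
        (nInt D A 1 : ℤ) - (nInt D A (Equiv.swap 0 1) : ℤ)) ∧
    nInt D A 1 = nInt D A (Equiv.swap 0 1) ∧
    (∀ p q : List (ℤ × ℤ), IsENPath p (D 0) (A 1) → IsENPath q (D 1) (A 0) →
      ∃ v : ℤ × ℤ, v ∈ p ∧ v ∈ q) := by
  classical
  have part3 : ∀ p q : List (ℤ × ℤ), IsENPath p (D 0) (A 1) → IsENPath q (D 1) (A 0) →
      ∃ v : ℤ × ℤ, v ∈ p ∧ v ∈ q := by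
    intro p q hp hq
    by_contra hc
    push_neg at hc
    have hps : IsENPath p (D 0) (A ((Equiv.swap 0 1 : Equiv.Perm (Fin 2)) 0)) := by
      rwa [Equiv.swap_apply_left]
    have hqs : IsENPath q (D 1) (A ((Equiv.swap 0 1 : Equiv.Perm (Fin 2)) 1)) := by
      rwa [Equiv.swap_apply_right]
    have hcon := compat (Equiv.swap 0 1) p q hps hqs (fun v hv => hc v hv.1 hv.2)
    have h01 := congrArg (fun σ : Equiv.Perm (Fin 2) => σ 0) hcon
    simp [Equiv.swap_apply_left] at h01
  -- identify nInt with intSet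
  have hn1 : nInt D A 1 = (GVaux.intSet (D 0) (A 0) (D 1) (A 1)).ncard := by
    simp [nInt, GVaux.intSet]
  have hn2 : nInt D A (Equiv.swap 0 1) = (GVaux.intSet (D 0) (A 1) (D 1) (A 0)).ncard := by
    simp [nInt, GVaux.intSet]
  have part2 : nInt D A 1 = nInt D A (Equiv.swap 0 1) := by
    rw [hn1, hn2]
    exact GVaux.intSet_ncard_eq _ _ _ _
  refine ⟨?_, part2, part3⟩
  -- counting
  have hfin11 : (GVaux.pathSet (D 0) (A 0) ×ˢ GVaux.pathSet (D 1) (A 1)).Finite :=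
    (GVaux.pathSet_finite _ _).prod (GVaux.pathSet_finite _ _)
  have hP11 : (GVaux.pathSet (D 0) (A 0) ×ˢ GVaux.pathSet (D 1) (A 1)).ncard =
      gvCoef (D 0) (A 0) * gvCoef (D 1) (A 1) :=
    GVaux.prod_ncard _ _ _ _ (hnn 0 0) (hnn 1 1)
  have hP12 : (GVaux.pathSet (D 0) (A 1) ×ˢ GVaux.pathSet (D 1) (A 0)).ncard =
      gvCoef (D 0) (A 1) * gvCoef (D 1) (A 0) :=
    GVaux.prod_ncard _ _ _ _ (hnn 0 1) (hnn 1 0)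
  have hall : GVaux.intSet (D 0) (A 1) (D 1) (A 0) =
      GVaux.pathSet (D 0) (A 1) ×ˢ GVaux.pathSet (D 1) (A 0) := by
    apply Set.Subset.antisymm (GVaux.intSet_subset _ _ _ _)
    rintro ⟨p, q⟩ ⟨hp, hq⟩
    exact ⟨hp, hq, part3 p q hp hq⟩
  have hswapval : nInt D A (Equiv.swap 0 1) = gvCoef (D 0) (A 1) * gvCoef (D 1) (A 0) := by
    rw [hn2, hall, hP12]
  have hsplit : (GVaux.pathSet (D 0) (A 0) ×ˢ GVaux.pathSet (D 1) (A 1)) =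
      {pq : List (ℤ × ℤ) × List (ℤ × ℤ) |
        IsENPath pq.1 (D 0) (A 0) ∧ IsENPath pq.2 (D 1) (A 1) ∧
        ∀ v : ℤ × ℤ, ¬(v ∈ pq.1 ∧ v ∈ pq.2)} ∪ GVaux.intSet (D 0) (A 0) (D 1) (A 1) := by
    ext ⟨p, q⟩
    simp only [Set.mem_prod, Set.mem_union, Set.mem_setOf_eq, GVaux.intSet, GVaux.pathSet]
    constructor
    · rintro ⟨hp, hq⟩
      by_cases h : ∃ v : ℤ × ℤ, v ∈ p ∧ v ∈ q
      · exact Or.inr ⟨hp, hq, h⟩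
      · push_neg at h
        exact Or.inl ⟨hp, hq, fun v hv => h v hv.1 hv.2⟩
    · rintro (⟨hp, hq, _⟩ | ⟨hp, hq, _⟩) <;> exact ⟨hp, hq⟩
  have hdisjU : Disjoint {pq : List (ℤ × ℤ) × List (ℤ × ℤ) |
        IsENPath pq.1 (D 0) (A 0) ∧ IsENPath pq.2 (D 1) (A 1) ∧
        ∀ v : ℤ × ℤ, ¬(v ∈ pq.1 ∧ v ∈ pq.2)} (GVaux.intSet (D 0) (A 0) (D 1) (A 1)) := by
    rw [Set.disjoint_left]
    rintro ⟨p, q⟩ ⟨_, _, hno⟩ ⟨_, _, v, hv1, hv2⟩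
    exact hno v ⟨hv1, hv2⟩
  have hfd : ({pq : List (ℤ × ℤ) × List (ℤ × ℤ) |
        IsENPath pq.1 (D 0) (A 0) ∧ IsENPath pq.2 (D 1) (A 1) ∧
        ∀ v : ℤ × ℤ, ¬(v ∈ pq.1 ∧ v ∈ pq.2)} : Set _).Finite := by
    apply hfin11.subset
    rintro ⟨p, q⟩ ⟨hp, hq, _⟩
    exact ⟨hp, hq⟩
  have hfi : (GVaux.intSet (D 0) (A 0) (D 1) (A 1)).Finite :=
    hfin11.subset (GVaux.intSet_subset _ _ _ _)
  have hcount : Set.ncard {pq : List (ℤ × ℤ) × List (ℤ × ℤ) |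
        IsENPath pq.1 (D 0) (A 0) ∧ IsENPath pq.2 (D 1) (A 1) ∧
        ∀ v : ℤ × ℤ, ¬(v ∈ pq.1 ∧ v ∈ pq.2)} + (GVaux.intSet (D 0) (A 0) (D 1) (A 1)).ncard =
      gvCoef (D 0) (A 0) * gvCoef (D 1) (A 1) := by
    rw [← hP11, hsplit, Set.ncard_union_eq hdisjU hfd hfi]
  have e1 : (Set.ncard {pq : List (ℤ × ℤ) × List (ℤ × ℤ) |
        IsENPath pq.1 (D 0) (A 0) ∧ IsENPath pq.2 (D 1) (A 1) ∧
        ∀ v : ℤ × ℤ, ¬(v ∈ pq.1 ∧ v ∈ pq.2)} : ℤ) + (nInt D A 1 : ℤ) =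
      (gvCoef (D 0) (A 0) : ℤ) * (gvCoef (D 1) (A 1) : ℤ) := by
    rw [hn1]
    exact_mod_cast congrArg (fun n : ℕ => (n : ℤ)) hcount
  have e2 : (nInt D A 1 : ℤ) = (gvCoef (D 0) (A 1) : ℤ) * (gvCoef (D 1) (A 0) : ℤ) := by
    rw [part2, hswapval]; push_cast; ring
  have e3 : (nInt D A (Equiv.swap 0 1) : ℤ) = (nInt D A 1 : ℤ) := by
    rw [part2]
  linarith
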